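/- Let 𝔄 be a Boolean algebra with an operator ◇ (a unary function preserving finite joins and sending ⊥ to ⊥). If 𝔄 satisfies condition 𝓡 — for all a, b, if a ∧ ◇b ≠ ⊥ then there exists c with ⊥ ≠ c ≤ b such that for all d with ⊥ ≠ d ≤ c, a ∧ ◇d ≠ ⊥ — then ◇ is completely additive: for every set X of elements whose join ⋁X exists, ⋁{◇x | x ∈ X} exists and equals ◇⋁X. -/
import Mathlib


/-- Condition 𝓡 implies complete additivity of an operator on a Boolean algebra. -/
theorem stmt_1 {α : Type*} [BooleanAlgebra α] (f : α → α)
    (hjoin : ∀ x y : α, f (x ⊔ y) = f x ⊔ f y) (hbot : f ⊥ = ⊥)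
    (hR : ∀ a b : α, a ⊓ f b ≠ ⊥ →
      ∃ c, c ≠ ⊥ ∧ c ≤ b ∧ ∀ d, d ≠ ⊥ → d ≤ c → a ⊓ f d ≠ ⊥) :
    ∀ (X : Set α) (s : α), IsLUB X s → IsLUB (f '' X) (f s) := by
  have hmono : Monotone f := by
    intro x y hxy
    have : f (x ⊔ y) = f x ⊔ f y := hjoin x y
    rw [sup_eq_right.mpr hxy] at this
    exact le_sup_left.trans this.ge
  intro X s hs
  constructor
  · rintro _ ⟨x, hx, rfl⟩
    exact hmono (hs.1 hx)
  · intro u hu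
    by_contra hle
    have ha : uᶜ ⊓ f s ≠ ⊥ := by
      intro h
      apply hle
      rw [inf_comm, ← sdiff_eq] at h
      exact sdiff_eq_bot_iff.mp h
    obtain ⟨c, hc0, hcs, hcd⟩ := hR uᶜ s ha
    -- find x ∈ X with c ⊓ x ≠ ⊥
    by_cases hx : ∃ x ∈ X, c ⊓ x ≠ ⊥
    · obtain ⟨x, hxX, hcx⟩ := hx
      have hd := hcd (c ⊓ x) hcx inf_le_left
      apply hd
      have h1 : f (c ⊓ x) ≤ u := le_trans (hmono inf_le_right) (hu ⟨x, hxX, rfl⟩)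
      have : uᶜ ⊓ f (c ⊓ x) ≤ uᶜ ⊓ u := inf_le_inf_left _ h1
      rw [compl_inf_eq_bot] at this
      exact le_bot_iff.mp this
    · push_neg at hx
      have : s ≤ cᶜ := hs.2 (fun x hxX => by
        have := hx x hxX
        exact le_compl_iff_disjoint_right.mpr (disjoint_iff.mpr (by rwa [inf_comm] at this)))
      exact hc0 (disjoint_self.mp (le_compl_iff_disjoint_right.mp (hcs.trans this)))
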